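/- Let P be a noncrossing partition of [n] invariant under rot^d where d | n. Then each ⟨rot^d⟩-orbit of blocks of P contains at most one wrapping block, where a block B is wrapping if B is not central and the interval [min(B), max(B)] contains every block in the ⟨rot^d⟩-orbit of B. -/

import Mathlib

open Fin.NatCast

/-- A relation on `Fin n` (a set partition via equivalence classes) is
noncrossing if whenever `a < b < c < d` with `a ~ c` and `b ~ d`, all four lie
in the same block. -/
def Noncrossing {n : ℕ} (r : Fin n → Fin n → Prop) : Prop :=
  ∀ a b c d : Fin n, a < b → b < c → c < d → r a c → r b d → r a b

/-- Shifting a set of labels by `d` modulo `n` (the action of `rot^d`). -/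
def shiftSet {n : ℕ} [NeZero n] (d : ℕ) (B : Set (Fin n)) : Set (Fin n) :=
  (fun x : Fin n => x + (d : Fin n)) '' B

/-- A block `B` is central (for `d`-fold rotation) if `rot^d` maps it to itself. -/
def IsCentral {n : ℕ} [NeZero n] (d : ℕ) (B : Set (Fin n)) : Prop :=
  shiftSet d B = B

/-- A block `B` is wrapping if it is not central and the interval
`[min B, max B]` contains every block in the `⟨rot^d⟩`-orbit of `B`. -/
def IsWrapping {n : ℕ} [NeZero n] (d : ℕ) (B : Set (Fin n)) : Prop :=
  ¬ IsCentral d B ∧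
    ∀ k : ℕ, ∀ y ∈ (shiftSet d)^[k] B, (∃ x ∈ B, x ≤ y) ∧ ∃ x ∈ B, y ≤ x

lemma shift_class {n : ℕ} [NeZero n] (d : ℕ) (r : Fin n → Fin n → Prop)
    (hinv : ∀ x y : Fin n, r x y ↔ r (x + (d : Fin n)) (y + (d : Fin n))) (j : Fin n) :
    shiftSet d {x | r j x} = {x | r (j + (d : Fin n)) x} := by
  ext y
  constructor
  · rintro ⟨x, hx, rfl⟩
    exact (hinv j x).mp hx
  · intro hy
    refine ⟨y - (d : Fin n), ?_, by simp⟩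
    have := (hinv j (y - (d : Fin n))).mpr
    simpa using this (by simpa using hy)

lemma shift_class_iter {n : ℕ} [NeZero n] (d : ℕ) (r : Fin n → Fin n → Prop)
    (hinv : ∀ x y : Fin n, r x y ↔ r (x + (d : Fin n)) (y + (d : Fin n))) (j : Fin n) (k : ℕ) :
    (shiftSet d)^[k] {x | r j x} = {x | r (j + k • (d : Fin n)) x} := by
  induction k with
  | zero => simp
  | succ k ih =>
    rw [Function.iterate_succ_apply', ih, shift_class d r hinv, succ_nsmul, add_assoc]

/-- In a noncrossing partition of `[n]` invariant under `rot^d` (with `d ∣ n`),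
each `⟨rot^d⟩`-orbit of blocks contains at most one wrapping block. -/
theorem at_most_one_wrapping_block_per_orbit (n d : ℕ) [NeZero n] (hd : d ∣ n)
    (r : Fin n → Fin n → Prop) (hr : Equivalence r) (hnc : Noncrossing r)
    (hinv : ∀ x y : Fin n, r x y ↔ r (x + (d : Fin n)) (y + (d : Fin n)))
    (i : Fin n) (k : ℕ)
    (h1 : IsWrapping d {x | r i x}) (h2 : IsWrapping d ((shiftSet d)^[k] {x | r i x})) :
    (shiftSet d)^[k] {x | r i x} = {x | r i x} := by
  set B : Set (Fin n) := {x | r i x} with hB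
  set j : Fin n := i + k • (d : Fin n) with hj
  have hBk : (shiftSet d)^[k] B = {x | r j x} := shift_class_iter d r hinv i k
  -- choose k' with shift^[k'] of the shifted block coming back to B
  obtain ⟨m, hm⟩ := hd
  have hm1 : 1 ≤ m := by
    rcases Nat.eq_zero_or_pos m with h | h
    · exfalso; exact (NeZero.ne n) (by rw [hm, h, mul_zero])
    · exact h
  have hback : (shiftSet d)^[k * (m - 1)] ((shiftSet d)^[k] B) = B := by
    rw [hBk, shift_class_iter d r hinv j, hj, add_assoc, ← add_nsmul]
    have : (k + k * (m - 1)) • (d : Fin n) = 0 := by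
      have hkm : k + k * (m - 1) = k * m := by
        cases m with
        | zero => exact absurd hm1 (by omega)
        | succ m => simp [Nat.succ_sub_one]; ring
      open Fin.CommRing in rw [hkm, nsmul_eq_mul, ← Nat.cast_mul]
      have : (k * m * d) = k * n := by rw [hm]; ring
      open Fin.CommRing in rw [this, Nat.cast_mul, Fin.natCast_self, mul_zero]
    rw [this, add_zero]
  -- min elements
  have hBne : B.Nonempty := ⟨i, hr.refl i⟩
  have hB'ne : ((shiftSet d)^[k] B).Nonempty := ⟨j, by rw [hBk]; exact hr.refl j⟩
  obtain ⟨a, haB, hamin⟩ := Set.exists_min_image B id (Set.toFinite B) hBne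
  obtain ⟨a', haB', hamin'⟩ :=
    Set.exists_min_image ((shiftSet d)^[k] B) id (Set.toFinite _) hB'ne
  -- a ≤ a' and a' ≤ a
  obtain ⟨⟨x, hxB, hxa'⟩, -⟩ := h1.2 k a' haB'
  obtain ⟨⟨x', hx'B', hx'a⟩, -⟩ := h2.2 (k * (m - 1)) a (by rw [hback]; exact haB)
  have h1' : a ≤ a' := le_trans (hamin x hxB) hxa'
  have h2' : a' ≤ a := le_trans (hamin' x' hx'B') hx'a
  have haa : a = a' := le_antisymm h1' h2'
  -- a ∈ B ∩ B', so blocks coincide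
  have hia : r i a := haB
  have hja : r j a := by rw [haa]; rw [hBk] at haB'; exact haB'
  rw [hBk, hB]
  ext x
  simp only [Set.mem_setOf_eq]
  exact ⟨fun h => hr.trans hia (hr.trans (hr.symm hja) h),
         fun h => hr.trans hja (hr.trans (hr.symm hia) h)⟩
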